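/- Let $K \in \mathbb{N}_0$, $m \in \mathbb{R}$ with $m > 1$, let $u > 0$ be fixed, and let $u < v_1 \le v_2$. Define $F(u,v) = \frac{(v-u)^{m-1}}{(m-1)\,u\,v^{m-1}}$. Then $\int_{v_1}^{v_2} (v-u)^{m-2}\,\partial_v^K\!\left(v^{-m}\right)dv = \left(\partial_u + \partial_v\right)^K F(u,v)\big|_{v=v_2} - \left(\partial_u + \partial_v\right)^K F(u,v)\big|_{v=v_1}$, where $(\partial_u+\partial_v)^K$ denotes the $K$-th iterated application of the vector field $T = \partial_u + \partial_v$ acting on functions of $(u,v)$. -/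

import Mathlib

open MeasureTheory


/-- The vector field `L = ∂_v` acting on functions of `(u, v)`. -/
noncomputable def Lvf : (ℝ → ℝ → ℝ) → ℝ → ℝ → ℝ := fun F u v => deriv (F u) v

/-- The vector field `T = ∂_u + ∂_v` acting on functions of `(u, v)`. -/
noncomputable def Tvf : (ℝ → ℝ → ℝ) → ℝ → ℝ → ℝ := fun F u v =>
  deriv (fun s => F s v) u + deriv (F u) v

section AuxTK
set_option autoImplicit false
open Finset
open Finset
noncomputable def cc (p : ℝ) (n : ℕ) : ℝ := ∏ l ∈ Finset.range n, (p - l)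
lemma cc_zero (p : ℝ) : cc p 0 = 1 := by simp [cc]
lemma cc_succ (p : ℝ) (n : ℕ) : cc p (n+1) = cc p n * (p - n) := Finset.prod_range_succ _ _
lemma cc_succ' (p : ℝ) (n : ℕ) : cc p (n+1) = cc (p-1) n * p := by
  unfold cc
  rw [Finset.prod_range_succ']
  simp only [Nat.cast_add, Nat.cast_one, Nat.cast_zero]
  congr 1
  · apply Finset.prod_congr rfl; intro i _; ring
  · norm_num

noncomputable def aa (m : ℝ) (K j : ℕ) : ℝ := (K.choose j : ℝ) * cc (-1) j * cc (1-m) (K-j)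

lemma aa_zero (m : ℝ) (K : ℕ) : aa m K 0 = cc (1-m) K := by simp [aa, cc_zero]
lemma aa_top (m : ℝ) (K : ℕ) : aa m K (K+1) = 0 := by simp [aa, Nat.choose_succ_self]

lemma coeff_rec (m : ℝ) (K i : ℕ) (hi : i ≤ K) :
    aa m (K+1) (i+1) = aa m K i * (-1-(i:ℝ)) + aa m K (i+1) * (1-m-(K:ℝ)+(i+1)) := by
  rcases lt_or_eq_of_le hi with h | h
  · have h1 : K - i = (K - (i+1)) + 1 := by omega
    have h2 : (K+1) - (i+1) = K - i := by omega
    have h3 : cc (1-m) (K - i) = cc (1-m) (K - (i+1)) * (1-m-(K:ℝ)+(i+1)) := by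
      rw [h1, cc_succ]
      congr 1
      have : ((K - (i+1) : ℕ) : ℝ) = (K:ℝ) - (i+1) := by
        push_cast [Nat.cast_sub (by omega : i+1 ≤ K)]; ring
      rw [this]; ring
    have h4 : ((K+1).choose (i+1) : ℝ) = (K.choose i : ℝ) + (K.choose (i+1) : ℝ) := by
      rw [Nat.choose_succ_succ]; push_cast; ring
    have h5 : cc (-1) (i+1) = cc (-1) i * (-1-(i:ℝ)) := cc_succ _ _
    unfold aa
    rw [h2, h4, h5, h3]
    ring
  · subst h
    simp [aa, Nat.choose_succ_self, Nat.sub_self, cc_zero, cc_succ, Nat.choose_self]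

lemma coeff_rec2 (m : ℝ) (K j : ℕ) (hj : j < K) :
    aa m K j * ((j:ℝ)-K) = aa m K (j+1) * (1-m-(K:ℝ)+(j+1)) := by
  have h1 : K - j = (K - (j+1)) + 1 := by omega
  have h3 : cc (1-m) (K - j) = cc (1-m) (K - (j+1)) * (1-m-(K:ℝ)+(j+1)) := by
    rw [h1, cc_succ]
    congr 1
    have : ((K - (j+1) : ℕ) : ℝ) = (K:ℝ) - (j+1) := by
      push_cast [Nat.cast_sub (by omega : j+1 ≤ K)]; ring
    rw [this]; ring
  have h5 : cc (-1) (j+1) = cc (-1) j * (-1-(j:ℝ)) := cc_succ _ _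
  have h6 : (K.choose (j+1) : ℝ) * ((j:ℝ)+1) = (K.choose j : ℝ) * ((K:ℝ) - j) := by
    have := Nat.add_one_mul_choose_eq K j
    have h7 : K.choose (j+1) * (j+1) = K.choose j * (K - j) := Nat.choose_succ_right_eq K j
    have := congrArg (fun n : ℕ => (n : ℝ)) h7
    push_cast [Nat.cast_sub hj.le] at this
    linarith [this]
  unfold aa
  rw [h3, h5]
  linear_combination (cc (-1) j * cc (1-m) (K-(j+1)) * (1-m-(K:ℝ)+((j:ℝ)+1))) * h6

noncomputable def SS (m : ℝ) (K : ℕ) (u v : ℝ) : ℝ :=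
  ∑ j ∈ Finset.range (K+1), aa m K j * u ^ (-1 - (j:ℝ)) * v ^ (1 - m - (K:ℝ) + (j:ℝ))

noncomputable def SU (m : ℝ) (K : ℕ) (u v : ℝ) : ℝ :=
  ∑ j ∈ Finset.range (K+1),
    aa m K j * ((-1 - (j:ℝ)) * u ^ (-1 - (j:ℝ) - 1)) * v ^ (1 - m - (K:ℝ) + (j:ℝ))

noncomputable def SV (m : ℝ) (K : ℕ) (u v : ℝ) : ℝ :=
  ∑ j ∈ Finset.range (K+1),
    aa m K j * u ^ (-1 - (j:ℝ)) * ((1 - m - (K:ℝ) + (j:ℝ)) * v ^ (1 - m - (K:ℝ) + (j:ℝ) - 1))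

noncomputable def GG (m : ℝ) (K : ℕ) (u v : ℝ) : ℝ := (v-u) ^ (m-1) * SS m K u v / (m-1)

lemma hasDerivAt_SS_u (m : ℝ) (K : ℕ) (v u : ℝ) (hu : u ≠ 0) :
    HasDerivAt (fun s => SS m K s v) (SU m K u v) u := by
  unfold SS SU
  apply HasDerivAt.fun_sum
  intro j _
  exact ((Real.hasDerivAt_rpow_const (p := -1 - (j:ℝ)) (Or.inl hu)).const_mul
    (aa m K j)).mul_const _

lemma hasDerivAt_SS_v (m : ℝ) (K : ℕ) (u v : ℝ) (hv : v ≠ 0) :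
    HasDerivAt (fun w => SS m K u w) (SV m K u v) v := by
  unfold SS SV
  apply HasDerivAt.fun_sum
  intro j _
  exact (Real.hasDerivAt_rpow_const (p := 1 - m - (K:ℝ) + (j:ℝ)) (Or.inl hv)).const_mul _

lemma hasDerivAt_GG_u (m : ℝ) (K : ℕ) (u v : ℝ) (hu : 0 < u) (huv : u < v) :
    HasDerivAt (fun s => GG m K s v)
      ((-((m-1) * (v-u)^(m-1-1)) * SS m K u v + (v-u)^(m-1) * SU m K u v) / (m-1)) u := by
  have hvu : v - u ≠ 0 := sub_ne_zero.mpr huv.ne'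
  have h1 : HasDerivAt (fun s : ℝ => (v - s) ^ (m-1)) (-((m-1) * (v-u)^(m-1-1))) u := by
    have hf : HasDerivAt (fun s : ℝ => v - s) (-1) u := (hasDerivAt_id u).const_sub v
    have hg := Real.hasDerivAt_rpow_const (p := m-1) (x := v - u) (Or.inl hvu)
    have := hg.comp u hf
    exact this.congr_deriv (by ring)
  have h2 := hasDerivAt_SS_u m K v u hu.ne'
  simpa [GG] using (h1.mul h2).div_const (m-1)

lemma hasDerivAt_GG_v (m : ℝ) (K : ℕ) (u v : ℝ) (hv : 0 < v) (huv : u < v) :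
    HasDerivAt (fun w => GG m K u w)
      (((m-1) * (v-u)^(m-1-1) * SS m K u v + (v-u)^(m-1) * SV m K u v) / (m-1)) v := by
  have hvu : v - u ≠ 0 := sub_ne_zero.mpr huv.ne'
  have h1 : HasDerivAt (fun w : ℝ => (w - u) ^ (m-1)) ((m-1) * (v-u)^(m-1-1)) v := by
    have hf : HasDerivAt (fun w : ℝ => w - u) 1 v := (hasDerivAt_id v).sub_const u
    have hg := Real.hasDerivAt_rpow_const (p := m-1) (x := v - u) (Or.inl hvu)
    have := hg.comp v hf
    exact this.congr_deriv (by ring)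
  have h2 := hasDerivAt_SS_v m K u v hv.ne'
  simpa [GG] using (h1.mul h2).div_const (m-1)

lemma sum_shift (f : ℕ → ℝ) (n : ℕ) (h : f (n+1) = 0) :
    ∑ j ∈ Finset.range (n+1), f j = (∑ i ∈ Finset.range (n+1), f (i+1)) + f 0 := by
  rw [Finset.sum_range_succ (fun i => f (i+1)), h, add_zero, Finset.sum_range_succ']

lemma SU_add_SV (m : ℝ) (K : ℕ) (u v : ℝ) :
    SU m K u v + SV m K u v = SS m (K+1) u v := by
  unfold SS SU SV
  rw [sum_shift (fun j => aa m K j * u ^ (-1 - (j:ℝ)) *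
        ((1 - m - (K:ℝ) + (j:ℝ)) * v ^ (1 - m - (K:ℝ) + (j:ℝ) - 1))) K
      (by simp [aa_top])]
  conv_rhs => rw [Finset.sum_range_succ']
  rw [← add_assoc, ← Finset.sum_add_distrib]
  congr 1
  · apply Finset.sum_congr rfl
    intro i hi
    rw [coeff_rec m K i (Nat.lt_succ_iff.mp (Finset.mem_range.mp hi))]
    push_cast
    ring_nf
  · rw [aa_zero, aa_zero, cc_succ]
    push_cast
    ring_nf

lemma inner_id (m : ℝ) (K : ℕ) (u v : ℝ) (hu : 0 < u) (hv : 0 < v) :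
    (m-1) * SS m K u v + (v-u) * SV m K u v = (m-1) * (cc (-m) K * v ^ (-m-(K:ℝ))) := by
  unfold SS SV
  rw [Finset.mul_sum, Finset.mul_sum, ← Finset.sum_add_distrib]
  have step1 : ∀ j ∈ Finset.range (K+1),
      (m-1) * (aa m K j * u ^ (-1-(j:ℝ)) * v ^ (1-m-(K:ℝ)+(j:ℝ)))
      + (v-u) * (aa m K j * u ^ (-1-(j:ℝ)) * ((1-m-(K:ℝ)+(j:ℝ)) * v ^ (1-m-(K:ℝ)+(j:ℝ)-1)))
      = aa m K j * ((j:ℝ)-(K:ℝ)) * u ^ (-1-(j:ℝ)) * v ^ (1-m-(K:ℝ)+(j:ℝ))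
        - aa m K j * (1-m-(K:ℝ)+(j:ℝ)) * u ^ (-(j:ℝ)) * v ^ (1-m-(K:ℝ)+(j:ℝ)-1) := by
    intro j _
    have e1 : v ^ (1-m-(K:ℝ)+(j:ℝ)) = v ^ (1-m-(K:ℝ)+(j:ℝ)-1) * v := by
      rw [← Real.rpow_add_one hv.ne' (1-m-(K:ℝ)+(j:ℝ)-1)]
      congr 1
      ring
    have e2 : u ^ (-(j:ℝ)) = u ^ (-1-(j:ℝ)) * u := by
      rw [← Real.rpow_add_one hu.ne' (-1-(j:ℝ))]
      congr 1
      ring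
    rw [e1, e2]
    ring
  rw [Finset.sum_congr rfl step1, Finset.sum_sub_distrib]
  rw [Finset.sum_range_succ
      (fun j => aa m K j * ((j:ℝ)-(K:ℝ)) * u ^ (-1-(j:ℝ)) * v ^ (1-m-(K:ℝ)+(j:ℝ)))]
  rw [Finset.sum_range_succ'
      (fun j => aa m K j * (1-m-(K:ℝ)+(j:ℝ)) * u ^ (-(j:ℝ)) * v ^ (1-m-(K:ℝ)+(j:ℝ)-1))]
  have hfK : aa m K K * ((K:ℝ)-(K:ℝ)) * u ^ (-1-(K:ℝ)) * v ^ (1-m-(K:ℝ)+(K:ℝ)) = 0 := by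
    simp
  have hmatch : ∀ i ∈ Finset.range K,
      aa m K i * ((i:ℝ)-(K:ℝ)) * u ^ (-1-(i:ℝ)) * v ^ (1-m-(K:ℝ)+(i:ℝ))
      = aa m K (i+1) * (1-m-(K:ℝ)+((i+1:ℕ):ℝ)) * u ^ (-((i+1:ℕ):ℝ))
          * v ^ (1-m-(K:ℝ)+((i+1:ℕ):ℝ)-1) := by
    intro i hi
    rw [coeff_rec2 m K i (Finset.mem_range.mp hi)]
    push_cast
    ring_nf
  have hg0 : aa m K 0 * (1-m-(K:ℝ)+((0:ℕ):ℝ)) * u ^ (-((0:ℕ):ℝ)) * v ^ (1-m-(K:ℝ)+((0:ℕ):ℝ)-1)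
      = -((m-1) * (cc (-m) K * v ^ (-m-(K:ℝ)))) := by
    rw [aa_zero]
    have : cc (1-m) K * (1-m-(K:ℝ)) = cc (-m) K * (1-m) := by
      have h := cc_succ' (1-m) K
      have h2 := cc_succ (1-m) K
      rw [show (1-m-1 : ℝ) = -m from by ring] at h
      linarith [h, h2]
    push_cast
    rw [show (1-m-(K:ℝ)+0-1 : ℝ) = -m-(K:ℝ) from by ring]
    simp only [neg_zero, Real.rpow_zero]
    linear_combination (v ^ (-m-(K:ℝ))) * this
  rw [hfK, Finset.sum_congr rfl hmatch, hg0]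
  ring

lemma DV_eq (m : ℝ) (K : ℕ) (u v : ℝ) (hm : 1 < m) (hu : 0 < u) (huv : u < v) :
    ((m-1) * (v-u)^(m-1-1) * SS m K u v + (v-u)^(m-1) * SV m K u v) / (m-1)
      = (v-u)^(m-2) * (cc (-m) K * v ^ (-m-(K:ℝ))) := by
  have hv : 0 < v := hu.trans huv
  have hvu : 0 < v - u := sub_pos.mpr huv
  have e : (v-u)^(m-1) = (v-u)^(m-2) * (v-u) := by
    rw [← Real.rpow_add_one hvu.ne' (m-2)]
    congr 1
    ring
  have e2 : (m-1-1 : ℝ) = m-2 := by ring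
  rw [e2, e, div_eq_iff (by linarith : (m-1 : ℝ) ≠ 0)]
  linear_combination ((v-u)^(m-2)) * inner_id m K u v hu hv

lemma Lvf_iter (f : ℝ → ℝ) (K : ℕ) :
    Lvf^[K] (fun _ w => f w) = fun _ w => deriv^[K] f w := by
  induction K with
  | zero => rfl
  | succ n ih =>
    rw [Function.iterate_succ_apply', ih]
    funext a b
    simp [Lvf, Function.iterate_succ_apply']

lemma deriv_iter_rpow (p : ℝ) (K : ℕ) :
    ∀ v : ℝ, v ≠ 0 → deriv^[K] (fun w : ℝ => w ^ p) v = cc p K * v ^ (p - (K:ℝ)) := by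
  induction K with
  | zero => intro v hv; simp [cc_zero]
  | succ n ih =>
    intro v hv
    rw [Function.iterate_succ_apply']
    have hev : deriv^[n] (fun w : ℝ => w ^ p) =ᶠ[nhds v] fun w => cc p n * w ^ (p - (n:ℝ)) := by
      apply Filter.eventuallyEq_of_mem (isOpen_compl_singleton.mem_nhds (by simpa using hv))
      intro w hw
      exact ih w (by simpa using hw)
    rw [hev.deriv_eq]
    rw [((Real.hasDerivAt_rpow_const (p := p - (n:ℝ)) (Or.inl hv)).const_mul (cc p n)).deriv]
    rw [cc_succ]
    push_cast
    ring_nf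

lemma TFK_eq (m : ℝ) (hm : 1 < m) (K : ℕ) :
    ∀ u v : ℝ, 0 < u → u < v →
      Tvf^[K] (fun a b => (b - a) ^ (m - 1) / ((m - 1) * a * b ^ (m - 1))) u v
        = GG m K u v := by
  induction K with
  | zero =>
    intro u v hu huv
    have hv : 0 < v := hu.trans huv
    simp only [Function.iterate_zero, id_eq]
    simp only [GG, SS, zero_add, Finset.sum_range_one, Nat.cast_zero, aa_zero, cc_zero, one_mul]
    have b1 : u ^ (-1 - (0:ℝ)) = u⁻¹ := by
      rw [show (-1 - (0:ℝ)) = -(1:ℝ) from by ring, Real.rpow_neg hu.le, Real.rpow_one]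
    have b2 : v ^ (1 - m - (0:ℝ) + (0:ℝ)) = (v ^ (m-1))⁻¹ := by
      rw [show (1 - m - (0:ℝ) + (0:ℝ)) = -(m-1) from by ring, Real.rpow_neg hv.le]
    rw [b1, b2]
    have hv1 : v ^ (m-1) ≠ 0 := (Real.rpow_pos_of_pos hv _).ne'
    field_simp
  | succ n ih =>
    intro u v hu huv
    have hv : 0 < v := hu.trans huv
    rw [Function.iterate_succ_apply']
    show deriv (fun s => Tvf^[n] _ s v) u + deriv (fun w => Tvf^[n] _ u w) v = _
    have h1 : deriv (fun s => Tvf^[n]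
        (fun a b => (b - a) ^ (m - 1) / ((m - 1) * a * b ^ (m - 1))) s v) u
        = deriv (fun s => GG m n s v) u := by
      apply Filter.EventuallyEq.deriv_eq
      apply Filter.eventuallyEq_of_mem (isOpen_Ioo.mem_nhds (⟨hu, huv⟩ : u ∈ Set.Ioo 0 v))
      intro s hs
      exact ih s v hs.1 hs.2
    have h2 : deriv (fun w => Tvf^[n]
        (fun a b => (b - a) ^ (m - 1) / ((m - 1) * a * b ^ (m - 1))) u w) v
        = deriv (fun w => GG m n u w) v := by
      apply Filter.EventuallyEq.deriv_eq
      apply Filter.eventuallyEq_of_mem (isOpen_Ioi.mem_nhds (huv : v ∈ Set.Ioi u))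
      intro w hw
      exact ih u w hu hw
    rw [h1, h2, (hasDerivAt_GG_u m n u v hu huv).deriv, (hasDerivAt_GG_v m n u v hv huv).deriv]
    rw [show ((-((m-1) * (v-u)^(m-1-1)) * SS m n u v + (v-u)^(m-1) * SU m n u v) / (m-1)
        + ((m-1) * (v-u)^(m-1-1) * SS m n u v + (v-u)^(m-1) * SV m n u v) / (m-1))
        = ((v-u)^(m-1) * (SU m n u v + SV m n u v)) / (m-1) from by ring]
    rw [SU_add_SV]
    rfl

end AuxTK

/-- For `K ∈ ℕ₀`, `m > 1`, `0 < u < v₁ ≤ v₂`, and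
`F(u,v) = (v-u)^(m-1) / ((m-1) u v^(m-1))`, one has
`∫_{v₁}^{v₂} (v-u)^(m-2) ∂_v^K (v^(-m)) dv = (T^K F)(u, v₂) - (T^K F)(u, v₁)`,
where `T = ∂_u + ∂_v`. -/
theorem integral_identity_TK (K : ℕ) (m u v₁ v₂ : ℝ)
    (hm : 1 < m) (hu : 0 < u) (h1 : u < v₁) (h2 : v₁ ≤ v₂) :
    ∫ v in v₁..v₂, (v - u) ^ (m - 2) * Lvf^[K] (fun _ w => w ^ (-m)) u v
      = Tvf^[K] (fun a b => (b - a) ^ (m - 1) / ((m - 1) * a * b ^ (m - 1))) u v₂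
        - Tvf^[K] (fun a b => (b - a) ^ (m - 1) / ((m - 1) * a * b ^ (m - 1))) u v₁ := by
  have hv₁ : 0 < v₁ := hu.trans h1
  have huicc : Set.uIcc v₁ v₂ = Set.Icc v₁ v₂ := Set.uIcc_of_le h2
  have hcongr : Set.EqOn (fun v => (v - u) ^ (m - 2) * Lvf^[K] (fun _ w => w ^ (-m)) u v)
      (fun v => (v - u) ^ (m - 2) * (cc (-m) K * v ^ (-m - (K:ℝ)))) (Set.uIcc v₁ v₂) := by
    intro v hv
    rw [huicc] at hv
    have hv0 : v ≠ 0 := (hv₁.trans_le hv.1).ne'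
    simp only [Lvf_iter]
    rw [deriv_iter_rpow (-m) K v hv0]
  rw [intervalIntegral.integral_congr hcongr]
  have hderiv : ∀ v ∈ Set.uIcc v₁ v₂, HasDerivAt (fun w => GG m K u w)
      ((v - u) ^ (m - 2) * (cc (-m) K * v ^ (-m - (K:ℝ)))) v := by
    intro v hv
    rw [huicc] at hv
    have huv : u < v := h1.trans_le hv.1
    have h := hasDerivAt_GG_v m K u v (hu.trans huv) huv
    rwa [DV_eq m K u v hm hu huv] at h
  have hint : IntervalIntegrable (fun v => (v - u) ^ (m - 2) * (cc (-m) K * v ^ (-m - (K:ℝ))))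
      MeasureTheory.volume v₁ v₂ := by
    apply ContinuousOn.intervalIntegrable
    apply ContinuousOn.mul
    · apply ContinuousOn.rpow_const (continuous_id.continuousOn.sub continuousOn_const)
      intro v hv
      rw [huicc] at hv
      exact Or.inl (sub_ne_zero.mpr (h1.trans_le hv.1).ne')
    · apply ContinuousOn.mul continuousOn_const
      apply ContinuousOn.rpow_const continuous_id.continuousOn
      intro v hv
      rw [huicc] at hv
      exact Or.inl (hv₁.trans_le hv.1).ne'
  rw [intervalIntegral.integral_eq_sub_of_hasDerivAt hderiv hint]
  rw [TFK_eq m hm K u v₂ hu (h1.trans_le h2), TFK_eq m hm K u v₁ hu h1]
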